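/- Model selection consistency: Let Θ_K ⊂ ℝ^{D_K}, 1 ≤ K ≤ K_M, with D₁ ≤ … ≤ D_{K_M}, θ_K⁰ ∈ argmin_{Θ_K} E[γ(θ)], and K₀ = min argmin_K E[γ(θ_K⁰)]. Assume (B2) γ_n(θ̂_K) → E[γ(θ_K⁰)] in probability for each K; (B3) pen(K) > 0, pen(K) = o_P(1), and n(pen(K) - pen(K')) → ∞ in probability for K > K'; (B4) n(γ_n(θ̂_{K₀}) - γ_n(θ̂_K)) = O_P(1) for every K minimizing E[γ(θ_K⁰)]. Define K̂ = min argmin_K {γ_n(θ̂_K) + pen(K)}. Then P[K̂ ≠ K₀] → 0 as n → ∞. -/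

import Mathlib

open MeasureTheory Filter
open scoped ENNReal

/-- Model selection consistency: models `Θ_K ⊂ ℝ^{D_K}` for `1 ≤ K ≤ K_M` with
nondecreasing dimensions, `θ_K⁰` a minimizer of the expected contrast `g_K` in model
`K`, and `K₀` the smallest index minimizing `K ↦ g_K(θ_K⁰)`. Under
(B2) convergence in probability of the empirical contrast at the estimators,
(B3) positive penalties tending to `0` in probability with `n(pen(K) - pen(K')) → ∞`
in probability for `K > K'`, and (B4) `n(γ_n(θ̂_{K₀}) - γ_n(θ̂_K)) = O_P(1)` for
every minimizing `K`, the selected model `K̂ = min argmin (γ_n(θ̂_K) + pen(K))`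
satisfies `P[K̂ ≠ K₀] → 0`. -/
theorem model_selection_consistency (dim : ℕ) (KM : ℕ) (hKM : 1 ≤ KM)
    (D : ℕ → ℕ) (hD : ∀ K K', K ≤ K' → D K ≤ D K')
    {Ω : Type*} [MeasurableSpace Ω] (μ : Measure Ω) [IsProbabilityMeasure μ]
    (P : Measure (Fin dim → ℝ)) [IsProbabilityMeasure P]
    (X : ℕ → Ω → (Fin dim → ℝ)) (hXm : ∀ i, Measurable (X i))
    (hindep : ProbabilityTheory.iIndepFun X μ)
    (hmap : ∀ i, MeasureTheory.Measure.map (X i) μ = P)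
    (Θ : (K : ℕ) → Set (Fin (D K) → ℝ))
    (γ : (K : ℕ) → (Fin (D K) → ℝ) → (Fin dim → ℝ) → ℝ)
    (g : (K : ℕ) → (Fin (D K) → ℝ) → ℝ)
    (hg : ∀ K θ, g K θ = ∫ x, γ K θ x ∂P)
    (θ0 : (K : ℕ) → Fin (D K) → ℝ)
    (hθ0 : ∀ K ∈ Finset.Icc 1 KM, θ0 K ∈ Θ K ∧ ∀ θ ∈ Θ K, g K (θ0 K) ≤ g K θ)
    -- K₀ = min argmin of the minimal expected contrast
    (K0 : ℕ) (hK0mem : K0 ∈ Finset.Icc 1 KM)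
    (hK0min : ∀ K ∈ Finset.Icc 1 KM, g K0 (θ0 K0) ≤ g K (θ0 K))
    (hK0least : ∀ K ∈ Finset.Icc 1 KM, g K (θ0 K) ≤ g K0 (θ0 K0) → K0 ≤ K)
    -- estimators and their empirical contrast values
    (θhat : (K : ℕ) → ℕ → Ω → (Fin (D K) → ℝ))
    (hθhat : ∀ K ∈ Finset.Icc 1 KM, ∀ n ω, θhat K n ω ∈ Θ K)
    (c : (K : ℕ) → ℕ → Ω → ℝ)
    (hc : ∀ K n ω,
      c K n ω = (∑ i ∈ Finset.range n, γ K (θhat K n ω) (X i ω)) / n)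
    -- (B2)
    (hB2 : ∀ K ∈ Finset.Icc 1 KM, ∀ ε > (0:ℝ),
      Tendsto (fun n => μ {ω | ε < |c K n ω - g K (θ0 K)|}) atTop (nhds 0))
    -- (B3)
    (pen : ℕ → ℕ → Ω → ℝ)
    (hpen_pos : ∀ n K ω, 0 < pen n K ω)
    (hpen_small : ∀ K ∈ Finset.Icc 1 KM, ∀ ε > (0:ℝ),
      Tendsto (fun n => μ {ω | ε < pen n K ω}) atTop (nhds 0))
    (hpen_sep : ∀ K ∈ Finset.Icc 1 KM, ∀ K' ∈ Finset.Icc 1 KM, K' < K →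
      ∀ C : ℝ, Tendsto
        (fun (n : ℕ) => μ {ω | (n : ℝ) * (pen n K ω - pen n K' ω) ≤ C}) atTop (nhds 0))
    -- (B4)
    (hB4 : ∀ K ∈ Finset.Icc 1 KM, g K (θ0 K) = g K0 (θ0 K0) →
      ∀ ε > (0:ℝ), ∃ C : ℝ, ∀ᶠ n in atTop,
        μ {ω | C < |((n : ℕ) : ℝ) * (c K0 n ω - c K n ω)|} ≤ ENNReal.ofReal ε)
    -- the selected model: smallest minimizer of the penalized criterion
    (Khat : ℕ → Ω → ℕ)
    (hKhat_mem : ∀ n ω, Khat n ω ∈ Finset.Icc 1 KM)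
    (hKhat_min : ∀ n ω, ∀ K ∈ Finset.Icc 1 KM,
      c (Khat n ω) n ω + pen n (Khat n ω) ω ≤ c K n ω + pen n K ω)
    (hKhat_least : ∀ n ω, ∀ K ∈ Finset.Icc 1 KM,
      c K n ω + pen n K ω ≤ c (Khat n ω) n ω + pen n (Khat n ω) ω →
      Khat n ω ≤ K) :
    Tendsto (fun n => μ {ω | Khat n ω ≠ K0}) atTop (nhds 0) := by
  classical
  set S := Finset.Icc 1 KM with hS
  -- Bound the probability of misselection by a finite sum over wrong models
  have hbound : ∀ n, μ {ω | Khat n ω ≠ K0} ≤ ∑ K ∈ S.erase K0, μ {ω | Khat n ω = K} := by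
    intro n
    calc μ {ω | Khat n ω ≠ K0}
        ≤ μ (⋃ K ∈ S.erase K0, {ω | Khat n ω = K}) := by
          apply measure_mono
          intro ω hω
          simp only [Set.mem_setOf_eq] at hω
          simp only [Set.mem_iUnion, Set.mem_setOf_eq]
          exact ⟨Khat n ω, Finset.mem_erase.2 ⟨hω, hKhat_mem n ω⟩, rfl⟩
      _ ≤ ∑ K ∈ S.erase K0, μ {ω | Khat n ω = K} := measure_biUnion_finset_le _ _
  -- Each wrong model is selected with vanishing probability
  have hterm : ∀ K ∈ S.erase K0,
      Tendsto (fun n => μ {ω | Khat n ω = K}) atTop (nhds 0) := by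
    intro K hK
    obtain ⟨hKne, hKmem⟩ := Finset.mem_erase.1 hK
    have hle : g K0 (θ0 K0) ≤ g K (θ0 K) := hK0min K hKmem
    rcases hle.lt_or_eq with hlt | heq
    · -- K does not minimize the expected contrast
      set δ := (g K (θ0 K) - g K0 (θ0 K0)) / 3 with hδ
      have hδpos : 0 < δ := by
        rw [hδ]; linarith
      have hgK : g K (θ0 K) = g K0 (θ0 K0) + 3 * δ := by rw [hδ]; ring
      have hincl : ∀ n, {ω | Khat n ω = K} ⊆
          ({ω | δ < |c K n ω - g K (θ0 K)|} ∪ {ω | δ < |c K0 n ω - g K0 (θ0 K0)|})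
          ∪ {ω | δ < pen n K0 ω} := by
        intro n ω hω
        simp only [Set.mem_setOf_eq] at hω
        by_contra hcon
        simp only [Set.mem_union, Set.mem_setOf_eq, not_or, not_lt] at hcon
        obtain ⟨⟨h1, h2⟩, h3⟩ := hcon
        have h1' := abs_le.1 h1
        have h2' := abs_le.1 h2
        have hmin := hKhat_min n ω K0 hK0mem
        rw [hω] at hmin
        have hp := hpen_pos n K ω
        linarith [h1'.1, h2'.2]
      have hupper : Tendsto (fun n =>
          (μ {ω | δ < |c K n ω - g K (θ0 K)|} + μ {ω | δ < |c K0 n ω - g K0 (θ0 K0)|})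
          + μ {ω | δ < pen n K0 ω}) atTop (nhds 0) := by
        have h12 : Tendsto (fun n =>
            μ {ω | δ < |c K n ω - g K (θ0 K)|} + μ {ω | δ < |c K0 n ω - g K0 (θ0 K0)|})
            atTop (nhds 0) := by
          have := Tendsto.add (hB2 K hKmem δ hδpos) (hB2 K0 hK0mem δ hδpos)
          simpa using this
        have := Tendsto.add h12 (hpen_small K0 hK0mem δ hδpos)
        simpa using this
      refine tendsto_of_tendsto_of_tendsto_of_le_of_le tendsto_const_nhds hupper
        (fun n => zero_le) (fun n => ?_)
      calc μ {ω | Khat n ω = K}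
          ≤ μ (({ω | δ < |c K n ω - g K (θ0 K)|} ∪ {ω | δ < |c K0 n ω - g K0 (θ0 K0)|})
              ∪ {ω | δ < pen n K0 ω}) := measure_mono (hincl n)
        _ ≤ μ ({ω | δ < |c K n ω - g K (θ0 K)|} ∪ {ω | δ < |c K0 n ω - g K0 (θ0 K0)|})
              + μ {ω | δ < pen n K0 ω} := measure_union_le _ _
        _ ≤ (μ {ω | δ < |c K n ω - g K (θ0 K)|} + μ {ω | δ < |c K0 n ω - g K0 (θ0 K0)|})
              + μ {ω | δ < pen n K0 ω} := add_le_add_left (measure_union_le _ _) _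
    · -- K also minimizes the expected contrast, so K0 < K
      have hK0lt : K0 < K :=
        lt_of_le_of_ne (hK0least K hKmem heq.ge) (Ne.symm hKne)
      rw [ENNReal.tendsto_atTop_zero]
      intro ε hε
      obtain ⟨e, hepos, hee⟩ : ∃ e : ℝ, 0 < e ∧ ENNReal.ofReal e ≤ ε := by
        rcases eq_or_ne ε ⊤ with h | h
        · exact ⟨1, one_pos, by simp [h]⟩
        · exact ⟨ε.toReal, ENNReal.toReal_pos hε.ne' h, by rw [ENNReal.ofReal_toReal h]⟩
      obtain ⟨C, hC⟩ := hB4 K hKmem heq.symm (e / 2) (by positivity)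
      have hsep := hpen_sep K hKmem K0 hK0mem hK0lt C
      have hsep' : ∀ᶠ (n : ℕ) in atTop,
          μ {ω | (n : ℝ) * (pen n K ω - pen n K0 ω) ≤ C} ≤ ENNReal.ofReal (e / 2) := by
        have hpos : (0 : ℝ≥0∞) < ENNReal.ofReal (e / 2) := ENNReal.ofReal_pos.2 (by positivity)
        filter_upwards [hsep.eventually_lt_const hpos] with n hn using hn.le
      have hincl : ∀ n, {ω | Khat n ω = K} ⊆
          {ω | C < |(n : ℝ) * (c K0 n ω - c K n ω)|}
          ∪ {ω | (n : ℝ) * (pen n K ω - pen n K0 ω) ≤ C} := by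
        intro n ω hω
        simp only [Set.mem_setOf_eq] at hω
        rcases le_or_gt ((n : ℝ) * (pen n K ω - pen n K0 ω)) C with h | h
        · exact Or.inr h
        · left
          have hmin := hKhat_min n ω K0 hK0mem
          rw [hω] at hmin
          have hmul : (n : ℝ) * (pen n K ω - pen n K0 ω)
              ≤ (n : ℝ) * (c K0 n ω - c K n ω) :=
            mul_le_mul_of_nonneg_left (by linarith) (Nat.cast_nonneg n)
          exact lt_of_lt_of_le h (hmul.trans (le_abs_self _))
      obtain ⟨N, hN⟩ := eventually_atTop.1 (hC.and hsep')
      refine ⟨N, fun n hn => ?_⟩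
      obtain ⟨h1, h2⟩ := hN n hn
      calc μ {ω | Khat n ω = K}
          ≤ μ ({ω | C < |(n : ℝ) * (c K0 n ω - c K n ω)|}
              ∪ {ω | (n : ℝ) * (pen n K ω - pen n K0 ω) ≤ C}) := measure_mono (hincl n)
        _ ≤ μ {ω | C < |(n : ℝ) * (c K0 n ω - c K n ω)|}
              + μ {ω | (n : ℝ) * (pen n K ω - pen n K0 ω) ≤ C} := measure_union_le _ _
        _ ≤ ENNReal.ofReal (e / 2) + ENNReal.ofReal (e / 2) := add_le_add h1 h2
        _ = ENNReal.ofReal e := by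
            rw [← ENNReal.ofReal_add (by positivity) (by positivity)]
            norm_num
        _ ≤ ε := hee
  have hsum : Tendsto (fun n => ∑ K ∈ S.erase K0, μ {ω | Khat n ω = K}) atTop (nhds 0) := by
    have h := tendsto_finset_sum (S.erase K0) (fun K hK => hterm K hK)
    simpa using h
  exact tendsto_of_tendsto_of_tendsto_of_le_of_le tendsto_const_nhds hsum
    (fun n => zero_le) hbound
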